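/- (Periodic symbol sequences are realized by periodic solutions) Let f : ℝ × ℝ → ℝ be continuous and 1-periodic in the time variable, and suppose the equation x' = f(t,x) admits a solution x with x(t+2) = x(t) for all t ∈ ℝ and x(t₁+1) > x(t₁) for some t₁ ∈ ℝ. Then there exist real numbers p < q and s₁ ∈ ℝ such that for every integer k ≥ 1 and every k-periodic sequence η = (η_i)_{i∈ℤ} ∈ {0,1}^ℤ (i.e. η_{i+k} = η_i for all i ∈ ℤ) there exists a solution w : ℝ → ℝ of x' = f(t,x) with w(t+k) = w(t) for all t ∈ ℝ and, for all i ∈ ℤ: w(s₁+i) = q if η_i = 0 and w(s₁+i) = p if η_i = 1. -/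

import Mathlib

/-- `x` is a (classical) solution of the ODE `x' = f(t,x)` on the whole real line. -/
def IsSolution (f : ℝ × ℝ → ℝ) (x : ℝ → ℝ) : Prop :=
  ∀ t : ℝ, HasDerivAt x (f (t, x t)) t

theorem periodic_coin_tossing_realization
    (f : ℝ × ℝ → ℝ) (hf : Continuous f)
    (hper : ∀ t x : ℝ, f (t + 1, x) = f (t, x))
    (x : ℝ → ℝ) (hx : IsSolution f x)
    (hx2 : ∀ t : ℝ, x (t + 2) = x t)
    (t₁ : ℝ) (ht₁ : x t₁ < x (t₁ + 1)) :
    ∃ p q s₁ : ℝ, p < q ∧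
      ∀ (k : ℕ), 1 ≤ k → ∀ η : ℤ → Fin 2, (∀ i : ℤ, η (i + k) = η i) →
        ∃ w : ℝ → ℝ, IsSolution f w ∧ (∀ t : ℝ, w (t + k) = w t) ∧
          ∀ i : ℤ, (η i = 0 → w (s₁ + i) = q) ∧ (η i = 1 → w (s₁ + i) = p) := by
  classical
  -- x is continuous
  have hxc : Continuous x := by
    rw [continuous_iff_continuousAt]; exact fun t => (hx t).continuousAt
  -- integer-translate periodicity of x
  have hx2int : ∀ (n : ℤ) (t : ℝ), x (t + 2 * n) = x t := by
    intro n t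
    have hp : Function.Periodic x 2 := hx2
    have := (hp.int_mul n) t
    rw [mul_comm] at this
    exact this
  have key : ∀ (n : ℤ) (t s : ℝ), t = s + 2 * n → x t = x s := by
    intro n t s h; rw [h]; exact hx2int n s
  -- v(t) = x(t+1) is also a solution
  have hv : IsSolution f (fun t => x (t + 1)) := by
    intro t
    have h1 : HasDerivAt (fun t : ℝ => t + 1) 1 t := (hasDerivAt_id t).add_const 1
    have := (hx (t + 1)).comp t h1
    simpa [hper, Function.comp_def] using this
  -- find crossing point b ∈ (t₁, t₁+1) with x(b+1) = x(b)
  obtain ⟨b, hbmem, hb0⟩ : ∃ b ∈ Set.Ioo t₁ (t₁ + 1), (fun t => x (t + 1) - x t) b = 0 := by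
    have hc : ContinuousOn (fun t => x (t + 1) - x t) (Set.Icc t₁ (t₁ + 1)) :=
      ((hxc.comp (continuous_id.add continuous_const)).sub hxc).continuousOn
    have h2 : x (t₁ + 1 + 1) = x t₁ := by
      rw [show t₁ + 1 + 1 = t₁ + 2 by ring, hx2]
    have h1 : (0:ℝ) ∈ Set.Ioo ((fun t => x (t + 1) - x t) (t₁ + 1))
        ((fun t => x (t + 1) - x t) t₁) := by
      constructor
      · simp only; rw [h2]; linarith
      · simp only; linarith
    have := intermediate_value_Ioo' (by linarith : t₁ ≤ t₁ + 1) hc h1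
    obtain ⟨b, hb, hb0⟩ := this
    exact ⟨b, hb, hb0⟩
  obtain ⟨hb1, hb2⟩ := hbmem
  have hbx : x (b + 1) = x b := by
    have := hb0; simpa [sub_eq_zero] using this
  -- junction equality: x (b + j + 1) = x (b + j) for all j : ℤ
  have hjun : ∀ j : ℤ, x (b + j + 1) = x (b + j) := by
    intro j
    rcases Int.even_or_odd j with ⟨m, hm⟩ | ⟨m, hm⟩
    · have h1 : x (b + (j:ℝ)) = x b := key m _ b (by rw [hm]; push_cast; ring)
      have h2 : x (b + (j:ℝ) + 1) = x (b + 1) := key m _ (b+1) (by rw [hm]; push_cast; ring)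
      rw [h1, h2, hbx]
    · have h1 : x (b + (j:ℝ)) = x (b + 1) := key m _ (b+1) (by rw [hm]; push_cast; ring)
      have h2 : x (b + (j:ℝ) + 1) = x b := key (m+1) _ b (by rw [hm]; push_cast; ring)
      rw [h1, h2, hbx]
  -- ceiling of t₁ + i - b is i
  have hceil : ∀ i : ℤ, ⌈t₁ + (i : ℝ) - b⌉ = i := by
    intro i
    have he : t₁ + (i : ℝ) - b = (t₁ - b) + i := by ring
    rw [he, Int.ceil_add_intCast]
    have h0 : ⌈t₁ - b⌉ = 0 := by
      rw [Int.ceil_eq_iff]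
      constructor <;> push_cast <;> linarith
    rw [h0, zero_add]
  refine ⟨x t₁, x (t₁ + 1), t₁, ht₁, ?_⟩
  intro k hk η hη
  -- the choice predicate and the pieces
  set cond : ℤ → Prop := fun i => (η i = 0 ↔ Even i) with hcond
  set z : ℤ → ℝ → ℝ := fun j t => if cond j then x (t + 1) else x t with hz
  set w : ℝ → ℝ := fun t => z ⌈t - b⌉ t with hw
  have hzpos : ∀ j : ℤ, cond j → z j = fun t => x (t + 1) := by
    intro j h; funext t; exact if_pos h
  have hzneg : ∀ j : ℤ, ¬ cond j → z j = x := by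
    intro j h; funext t; exact if_neg h
  -- each piece is a solution
  have hzsol : ∀ (j : ℤ) (t : ℝ), HasDerivAt (z j) (f (t, z j t)) t := by
    intro j t
    by_cases h : cond j
    · rw [hzpos j h]; exact hv t
    · rw [hzneg j h]; exact hx t
  -- all pieces agree at junction points
  have hzjun : ∀ (j i : ℤ), z j (b + i) = x (b + i) := by
    intro j i
    by_cases h : cond j
    · rw [hzpos j h]; exact hjun i
    · rw [hzneg j h]
  -- w equals z j on the cell (b+j-1, b+j]
  have hwcell : ∀ (j : ℤ) (t : ℝ), (b : ℝ) + j - 1 < t → t ≤ b + j → w t = z j t := by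
    intro j t h1 h2
    have hc : ⌈t - b⌉ = j := by
      rw [Int.ceil_eq_iff]
      constructor <;> [linarith; linarith]
    simp only [hw, hc]
  -- w is a solution
  have hwsol : IsSolution f w := by
    intro t
    set j : ℤ := ⌈t - b⌉ with hj
    have hub : t ≤ b + j := by
      have := Int.le_ceil (t - b); rw [← hj] at this; linarith
    have hlb : (b : ℝ) + j - 1 < t := by
      have := Int.ceil_lt_add_one (t - b); rw [← hj] at this; linarith
    have hwt : w t = z j t := hwcell j t hlb hub
    rcases lt_or_eq_of_le hub with hlt | heq
    · -- interior point
      have hev : w =ᶠ[nhds t] z j := by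
        filter_upwards [Ioo_mem_nhds hlb hlt] with s hs
        exact hwcell j s hs.1 (le_of_lt hs.2)
      rw [hwt]
      exact (hzsol j t).congr_of_eventuallyEq hev
    · -- junction point : t = b + j
      have htj : t = b + j := heq
      have hxval : z j t = x t := by rw [htj]; exact hzjun j j
      rw [hwt, hxval]
      rw [← hasDerivWithinAt_univ, ← Set.Iic_union_Ici (a := t)]
      apply HasDerivWithinAt.union
      · -- left: use z j
        have hd : HasDerivWithinAt (z j) (f (t, x t)) (Set.Iic t) t := by
          have := (hzsol j t).hasDerivWithinAt (s := Set.Iic t)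
          rwa [hxval] at this
        apply hd.congr_of_eventuallyEq _ hwt
        filter_upwards [Ioc_mem_nhdsLE (by linarith : (b:ℝ) + j - 1 < t)] with s hs
        exact hwcell j s hs.1 (le_trans hs.2 (le_of_eq htj))
      · -- right: use z (j+1)
        have hxval' : z (j + 1) t = x t := by rw [htj]; exact hzjun (j + 1) j
        have hd : HasDerivWithinAt (z (j + 1)) (f (t, x t)) (Set.Ici t) t := by
          have := (hzsol (j + 1) t).hasDerivWithinAt (s := Set.Ici t)
          rwa [hxval'] at this
        apply hd.congr_of_eventuallyEq _ (by rw [hwt, hxval, hxval'])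
        filter_upwards [Ico_mem_nhdsGE (by linarith : t < t + 1)] with s hs
        rcases eq_or_lt_of_le hs.1 with hsl | hsl
        · rw [← hsl, hwt, hxval, hxval']
        · refine hwcell (j + 1) s ?_ ?_
          · push_cast; rw [htj] at hsl; linarith
          · push_cast; rw [htj] at hs; linarith [hs.2]
  refine ⟨w, hwsol, ?_, ?_⟩
  · -- periodicity with period k
    intro t
    set j : ℤ := ⌈t - b⌉ with hj
    have hceilk : ⌈t + (k : ℝ) - b⌉ = j + k := by
      have he : t + (k : ℝ) - b = (t - b) + (k : ℤ) := by push_cast; ring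
      rw [he, Int.ceil_add_intCast, ← hj]
    have hηk : η (j + k) = η j := hη j
    have hwt : w t = z j t := by simp only [hw, ← hj]
    have hwtk : w (t + k) = z (j + k) (t + k) := by simp only [hw, hceilk]
    rcases Nat.even_or_odd k with hke | hko
    · -- k even
      have hkE : Even ((k : ℤ)) := by exact_mod_cast hke
      have hEe : Even ((j : ℤ) + k) ↔ Even (j : ℤ) := by
        rw [Int.even_add]; tauto
      have hcondk : cond (j + k) ↔ cond j := by
        simp only [hcond, hηk, hEe]
      obtain ⟨m, hm⟩ := hke
      have hxk : ∀ s : ℝ, x (s + k) = x s := by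
        intro s; exact key m _ s (by rw [hm]; push_cast; ring)
      rw [hwt, hwtk]
      by_cases h : cond j
      · rw [hzpos _ (hcondk.mpr h), hzpos _ h]
        simp only
        rw [show t + (k:ℝ) + 1 = (t + 1) + k by ring, hxk]
      · rw [hzneg _ (fun hh => h (hcondk.mp hh)), hzneg _ h]
        exact hxk t
    · -- k odd
      have hkO : Odd ((k : ℤ)) := by exact_mod_cast hko
      have hkE : ¬ Even ((k : ℤ)) := Int.not_even_iff_odd.mpr hkO
      have hEe : Even ((j : ℤ) + k) ↔ ¬ Even (j : ℤ) := by
        rw [Int.even_add]; tauto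
      have hcondk : cond (j + k) ↔ ¬ cond j := by
        simp only [hcond, hηk, hEe]; tauto
      obtain ⟨m, hm⟩ := hko
      have hxk : ∀ s : ℝ, x (s + k) = x (s + 1) := by
        intro s; exact key m _ (s + 1) (by rw [hm]; push_cast; ring)
      have hxk2 : ∀ s : ℝ, x (s + k + 1) = x s := by
        intro s; exact key (m + 1) _ s (by rw [hm]; push_cast; ring)
      rw [hwt, hwtk]
      by_cases h : cond j
      · rw [hzneg _ (fun hh => (hcondk.mp hh) h), hzpos _ h]
        exact hxk t
      · rw [hzpos _ (hcondk.mpr h), hzneg _ h]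
        exact hxk2 t
  · -- values at t₁ + i
    intro i
    have hm : w (t₁ + i) = z i (t₁ + i) := by
      simp only [hw, hceil i]
    constructor
    · intro h0
      rw [hm]
      rcases Int.even_or_odd i with he | ho
      · have hc : cond i := by simp [hcond, h0, he]
        rw [hzpos _ hc]
        obtain ⟨n, hn⟩ := he
        exact key n _ (t₁ + 1) (by rw [hn]; push_cast; ring)
      · have hc : ¬ cond i := by
          simp only [hcond, h0, true_iff]
          exact Int.not_even_iff_odd.mpr ho
        rw [hzneg _ hc]
        obtain ⟨n, hn⟩ := ho
        exact key n _ (t₁ + 1) (by rw [hn]; push_cast; ring)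
    · intro h1
      have h0 : ¬ (η i = 0) := by rw [h1]; decide
      rw [hm]
      rcases Int.even_or_odd i with he | ho
      · have hc : ¬ cond i := by simp [hcond, h0, he]
        rw [hzneg _ hc]
        obtain ⟨n, hn⟩ := he
        exact key n _ t₁ (by rw [hn]; push_cast; ring)
      · have hc : cond i := by
          simp only [hcond, h0, false_iff]
          exact Int.not_even_iff_odd.mpr ho
        rw [hzpos _ hc]
        obtain ⟨n, hn⟩ := ho
        exact key (n + 1) _ t₁ (by rw [hn]; push_cast; ring)
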